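/- Let N be an n×n real matrix such that every eigenvalue λ ∈ ℂ of N (viewing N as a complex matrix) has strictly positive real part. Then every eigenvalue μ ∈ ℂ of the matrix exponential exp(−N) satisfies |μ| < 1; that is, the spectral radius of exp(−N) is strictly less than 1. -/

import Mathlib

open Matrix NormedSpace Module Module.End

attribute [local instance] Matrix.linftyOpNormedRing Matrix.linftyOpNormedAlgebra

-- eigenvector of B is eigenvector of exp B
lemma mulVec_exp_of_eigen {n : ℕ} (B : Matrix (Fin n) (Fin n) ℂ) {lam : ℂ}
    {w : Fin n → ℂ} (hw : B.mulVec w = lam • w) :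
    (exp B).mulVec w = Complex.exp lam • w := by
  have hpow : ∀ k : ℕ, (B ^ k).mulVec w = lam ^ k • w := by
    intro k
    induction k with
    | zero => simp
    | succ k ih =>
      rw [pow_succ, ← Matrix.mulVec_mulVec, hw]
      rw [Matrix.mulVec_smul, ih, pow_succ]
      rw [smul_smul, mul_comm]
  let L : Matrix (Fin n) (Fin n) ℂ →L[ℂ] (Fin n → ℂ) :=
    LinearMap.toContinuousLinearMap
      { toFun := fun M => M.mulVec w,
        map_add' := fun M M' => Matrix.add_mulVec M M' w,
        map_smul' := fun c M => M.smul_mulVec c w }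
  have hsum := expSeries_summable' (𝕂 := ℂ) B
  have hL : ∀ M : Matrix (Fin n) (Fin n) ℂ, L M = M.mulVec w := fun M => rfl
  calc (exp B).mulVec w = L (∑' k : ℕ, (k.factorial⁻¹ : ℂ) • B ^ k) := by
        rw [exp_eq_tsum (𝕂 := ℂ), hL]
    _ = ∑' k : ℕ, L ((k.factorial⁻¹ : ℂ) • B ^ k) := L.map_tsum hsum
    _ = ∑' k : ℕ, ((k.factorial⁻¹ : ℂ) * lam ^ k) • w := by
        refine tsum_congr fun k => ?_
        rw [hL, Matrix.smul_mulVec, hpow, smul_smul]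
    _ = (∑' k : ℕ, (k.factorial⁻¹ : ℂ) * lam ^ k) • w := by
        refine Summable.tsum_smul_const ?_ w
        simpa using expSeries_summable' (𝕂 := ℂ) lam
    _ = Complex.exp lam • w := by
        rw [Complex.exp_eq_exp_ℂ, exp_eq_tsum (𝕂 := ℂ)]
        simp [smul_eq_mul]

lemma exp_spectrum_key {n : ℕ} (B : Matrix (Fin n) (Fin n) ℂ) {μ : ℂ}
    (hμ : μ ∈ spectrum ℂ (exp B)) :
    ∃ lam ∈ spectrum ℂ B, μ = Complex.exp lam := by
  classical
  set f : End ℂ (Fin n → ℂ) := Matrix.toLinAlgEquiv' B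
  set g : End ℂ (Fin n → ℂ) := Matrix.toLinAlgEquiv' (exp B)
  have hg : μ ∈ spectrum ℂ g := by
    show μ ∈ spectrum ℂ (Matrix.toLinAlgEquiv' (exp B))
    rw [AlgEquiv.spectrum_eq]; exact hμ
  have hge : HasEigenvalue g μ := HasEigenvalue.of_mem_spectrum hg
  set E := eigenspace g μ with hE
  have hcomm : f * g = g * f := by
    simp only [f, g, ← _root_.map_mul]
    exact congrArg _ ((Commute.refl B).exp_right)
  have hstab : ∀ v ∈ E, f v ∈ E := by
    intro v hv
    rw [hE, mem_eigenspace_iff] at hv ⊢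
    calc g (f v) = (g * f) v := rfl
      _ = (f * g) v := by rw [hcomm]
      _ = f (g v) := rfl
      _ = μ • f v := by rw [hv, _root_.map_smul]
  have hEnt : Nontrivial E := Submodule.nontrivial_iff_ne_bot.mpr hge
  obtain ⟨lam, hlam⟩ := Module.End.exists_eigenvalue (LinearMap.restrict f hstab)
  obtain ⟨v, hv, hv0⟩ := hlam.exists_hasEigenvector
  rw [mem_eigenspace_iff] at hv
  have hfv : f ↑v = lam • (↑v : Fin n → ℂ) := by
    have := congrArg (Subtype.val) hv
    simpa [LinearMap.restrict_apply] using this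
  have hvne : (↑v : Fin n → ℂ) ≠ 0 := fun h => hv0 (Subtype.ext h)
  refine ⟨lam, ?_, ?_⟩
  · rw [show spectrum ℂ B = spectrum ℂ f from
        (AlgEquiv.spectrum_eq Matrix.toLinAlgEquiv' B).symm,
      ← hasEigenvalue_iff_mem_spectrum]
    exact hasEigenvalue_of_hasEigenvector ⟨mem_eigenspace_iff.mpr hfv, hvne⟩
  · have hgv : g ↑v = μ • (↑v : Fin n → ℂ) := mem_eigenspace_iff.mp v.2
    have hBv : B.mulVec ↑v = lam • (↑v : Fin n → ℂ) := by
      simpa [f, Matrix.toLinAlgEquiv'_apply, Matrix.toLin'_apply] using hfv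
    have h2 : (exp B).mulVec ↑v = μ • (↑v : Fin n → ℂ) := by
      simpa [g, Matrix.toLinAlgEquiv'_apply, Matrix.toLin'_apply] using hgv
    have h3 := mulVec_exp_of_eigen B hBv
    rw [h2] at h3
    have := sub_eq_zero.mpr h3
    rw [← sub_smul, smul_eq_zero] at this
    rcases this with h | h
    · exact (sub_eq_zero.mp h)
    · exact absurd h hvne

/-- If every complex eigenvalue of the real matrix `N` has strictly positive
real part, then every complex eigenvalue `μ` of `exp (−N)` satisfies `|μ| < 1`, i.e. the
spectral radius of `exp (−N)` is strictly less than `1`. -/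
theorem spectral_radius_exp_neg_lt_one
    (n : ℕ) (N : Matrix (Fin n) (Fin n) ℝ)
    (hN : ∀ lam ∈ spectrum ℂ (N.map (Complex.ofReal)), 0 < lam.re) :
    ∀ μ ∈ spectrum ℂ ((NormedSpace.exp (-N)).map (Complex.ofReal)), ‖μ‖ < 1 := by
  intro μ hμ
  set A : Matrix (Fin n) (Fin n) ℂ := N.map Complex.ofReal with hA
  have hmapneg : (-N).map (Complex.ofReal) = -A := by
    ext i j; simp [hA]
  have hmap : (exp (-N)).map (Complex.ofReal) = exp (-A) := by
    have hf : Continuous (Complex.ofRealHom.mapMatrix :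
        Matrix (Fin n) (Fin n) ℝ →+* Matrix (Fin n) (Fin n) ℂ) := by
      show Continuous fun M : Matrix (Fin n) (Fin n) ℝ => M.map Complex.ofRealHom
      exact continuous_id.matrix_map Complex.continuous_ofReal
    have h1 := map_exp (Complex.ofRealHom.mapMatrix :
        Matrix (Fin n) (Fin n) ℝ →+* Matrix (Fin n) (Fin n) ℂ) hf (-N)
    have h2 : ∀ M : Matrix (Fin n) (Fin n) ℝ,
        Complex.ofRealHom.mapMatrix M = M.map Complex.ofReal := fun M => rfl
    rw [h2, h2] at h1
    rw [← hmapneg]; exact h1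
  rw [hmap] at hμ
  obtain ⟨lam, hlam, rfl⟩ := exp_spectrum_key (-A) hμ
  have hneg : -lam ∈ spectrum ℂ A := by
    rw [spectrum.mem_iff] at hlam ⊢
    intro hu
    apply hlam
    have : (algebraMap ℂ (Matrix (Fin n) (Fin n) ℂ)) lam - (-A)
        = -((algebraMap ℂ (Matrix (Fin n) (Fin n) ℂ)) (-lam) - A) := by
      simp [map_neg]; abel
    rw [this]
    exact hu.neg
  have hre : lam.re < 0 := by
    have := hN _ hneg
    simp only [Complex.neg_re] at this
    linarith
  rw [Complex.norm_exp]
  exact Real.exp_lt_one_iff.mpr hre
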